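/- If R is a quasi-Baer ring, then the polynomial ring Polynomial R is a quasi-Baer ring. -/

import Mathlib

/-- A ring `T` is quasi-Baer if the right annihilator of every two-sided ideal of `T`
equals `eT` for some idempotent `e ∈ T`. -/
def IsQuasiBaer (T : Type*) [Ring T] : Prop :=
  ∀ I : TwoSidedIdeal T, ∃ e : T, e * e = e ∧
    {x : T | ∀ a ∈ I, a * x = 0} = {x : T | e * x = x}

section Aux

open Polynomial

variable {R : Type*} [Ring R]

/-- The two-sided ideal `{a | ∀ r, a * r * x = 0}`. -/
private def annId (x : R) : TwoSidedIdeal R :=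
  TwoSidedIdeal.mk' {a | ∀ r, a * r * x = 0}
    (by intro r; simp)
    (by intro a b ha hb r; simp only [Set.mem_setOf_eq] at *
        rw [add_mul, add_mul, ha r, hb r, add_zero])
    (by intro a ha r; simp only [Set.mem_setOf_eq] at *
        rw [neg_mul, neg_mul, ha r, neg_zero])
    (by intro s a ha r; simp only [Set.mem_setOf_eq] at *
        rw [mul_assoc s a r, mul_assoc, ha r, mul_zero])
    (by intro a s ha r; simp only [Set.mem_setOf_eq] at *
        rw [mul_assoc, mul_assoc]; rw [← mul_assoc s r x]
        have := ha (s * r); rwa [mul_assoc] at this)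

private lemma mem_annId {x a : R} : a ∈ annId x ↔ ∀ r, a * r * x = 0 :=
  TwoSidedIdeal.mem_mk' _ _ _ _ _ _ _

/-- Key lemma: if `q` right-annihilates the ideal `I` of `R[X]`, then every
coefficient of `q` (as a constant) right-annihilates `I`. -/
private lemma key (hR : IsQuasiBaer R) (I : TwoSidedIdeal (Polynomial R)) :
    ∀ n (q : R[X]), q.natDegree ≤ n → (∀ f ∈ I, f * q = 0) →
      ∀ f ∈ I, ∀ j, f * C (q.coeff j) = 0 := by
  -- Claim B : the top coefficient of such a `q` is killed by every `f ∈ I`.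
  have claimB : ∀ q : R[X], (∀ f ∈ I, f * q = 0) →
      ∀ f ∈ I, f * C (q.coeff q.natDegree) = 0 := by
    intro q hq
    set d := q.natDegree with hd
    set c := q.coeff d with hc
    -- leading coefficients of elements of I lie in `annId c`
    have hgen : ∀ g ∈ I, g.coeff g.natDegree ∈ annId c := by
      intro g hg
      rw [mem_annId]
      intro r
      have h1 : (g * C r) * q = 0 := hq _ (I.mul_mem_right _ _ hg)
      have h2 : ((g * C r) * q).coeff (g.natDegree + d) = 0 := by rw [h1, coeff_zero]
      rw [coeff_mul_add_eq_of_natDegree_le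
            (le_trans (natDegree_mul_le) (by simp [natDegree_C])) le_rfl] at h2
      rwa [coeff_mul_C] at h2
    obtain ⟨e, hee, hset⟩ := hR (annId c)
    have hfix : e * c = c := by
      have hmem : c ∈ {x : R | ∀ a ∈ annId c, a * x = 0} := by
        intro a ha
        have := (mem_annId.mp ha) 1
        rwa [mul_one] at this
      rw [hset] at hmem
      exact hmem
    have her : ∀ a ∈ annId c, a * e = 0 := by
      have : e ∈ {x : R | e * x = x} := hee
      rw [← hset] at this
      exact this
    -- induction on the degree of `g`
    suffices H : ∀ m, ∀ g ∈ I, g.natDegree ≤ m → g * C c = 0 by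
      exact fun f hf => H f.natDegree f hf le_rfl
    intro m
    induction m with
    | zero =>
      intro g hg hg0
      set g' := g * C e with hg'
      have hkey : g * C c = g' * C c := by
        rw [hg', mul_assoc, ← C_mul, hfix]
      have htop : g'.coeff g.natDegree = 0 := by
        rw [hg', coeff_mul_C]
        exact her _ (hgen g hg)
      have hz : g' = 0 := by
        by_contra hz
        have h1 : g'.natDegree ≤ g.natDegree :=
          le_trans (natDegree_mul_le) (by simp [natDegree_C])
        have h2 : g'.natDegree = 0 := le_antisymm (le_trans h1 hg0) (Nat.zero_le _)
        have h3 : g.natDegree = 0 := le_antisymm hg0 (Nat.zero_le _)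
        exact hz (leadingCoeff_eq_zero.mp (by rw [leadingCoeff, h2, ← h3]; exact htop))
      rw [hkey, hz, zero_mul]
    | succ m ih =>
      intro g hg hgm
      set g' := g * C e with hg'
      have hkey : g * C c = g' * C c := by
        rw [hg', mul_assoc, ← C_mul, hfix]
      have htop : g'.coeff g.natDegree = 0 := by
        rw [hg', coeff_mul_C]
        exact her _ (hgen g hg)
      by_cases hz : g' = 0
      · rw [hkey, hz, zero_mul]
      · have h1 : g'.natDegree ≤ g.natDegree :=
          le_trans (natDegree_mul_le) (by simp [natDegree_C])
        have hne : g'.natDegree ≠ g.natDegree := by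
          intro h
          exact hz (leadingCoeff_eq_zero.mp (by rw [leadingCoeff, h]; exact htop))
        have hlt : g'.natDegree < g.natDegree := lt_of_le_of_ne h1 hne
        have : g'.natDegree ≤ m := by omega
        rw [hkey, ih g' (I.mul_mem_right _ _ hg) this]
  intro n
  induction n with
  | zero =>
    intro q hq0 hq f hf j
    by_cases hj : j = q.natDegree
    · rw [hj]; exact claimB q hq f hf
    · have : q.coeff j = 0 := by
        apply coeff_eq_zero_of_natDegree_lt
        omega
      rw [this, C_0, mul_zero]
  | succ n ih =>
    intro q hdeg hq f hf j
    by_cases hj : j = q.natDegree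
    · rw [hj]; exact claimB q hq f hf
    · have hq' : ∀ g ∈ I, g * q.eraseLead = 0 := by
        intro g hg
        have h1 : q.eraseLead = q - C q.leadingCoeff * X ^ q.natDegree := by
          rw [eq_sub_iff_add_eq, eraseLead_add_C_mul_X_pow]
        have hc : g * C q.leadingCoeff = 0 := claimB q hq g hg
        rw [h1, mul_sub, hq g hg, ← mul_assoc, hc, zero_mul, sub_zero]
      have hdeg' : q.eraseLead.natDegree ≤ n := by
        have := q.eraseLead_natDegree_le
        omega
      have := ih q.eraseLead hdeg' hq' f hf j
      rwa [eraseLead_coeff_of_ne j hj] at this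
end Aux

/-- If `R` is quasi-Baer, then `Polynomial R` is quasi-Baer. -/
theorem polynomial_isQuasiBaer_of_isQuasiBaer (R : Type*) [Ring R]
    (hR : IsQuasiBaer R) : IsQuasiBaer (Polynomial R) := by
  classical
  intro I
  open Polynomial in
  -- the "coefficient ideal" J of R
  refine ?_
  let Jcar : Set R := {a | ∀ q : Polynomial R, (∀ f ∈ I, f * q = 0) →
    ∀ (r : R) (j : ℕ), a * r * q.coeff j = 0}
  have Jzero : (0 : R) ∈ Jcar := by intro q hq r j; rw [zero_mul, zero_mul]
  have Jadd : ∀ {x y : R}, x ∈ Jcar → y ∈ Jcar → x + y ∈ Jcar := by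
    intro x y hx hy q hq r j
    rw [add_mul, add_mul, hx q hq r j, hy q hq r j, add_zero]
  have Jneg : ∀ {x : R}, x ∈ Jcar → -x ∈ Jcar := by
    intro x hx q hq r j
    rw [neg_mul, neg_mul, hx q hq r j, neg_zero]
  have Jleft : ∀ {x y : R}, y ∈ Jcar → x * y ∈ Jcar := by
    intro x y hy q hq r j
    rw [mul_assoc x y r, mul_assoc, hy q hq r j, mul_zero]
  have Jright : ∀ {x y : R}, x ∈ Jcar → x * y ∈ Jcar := by
    intro x y hx q hq r j
    have := hx q hq (y * r) j
    rw [← mul_assoc] at this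
    exact this
  let J : TwoSidedIdeal R := TwoSidedIdeal.mk' Jcar Jzero Jadd Jneg Jleft Jright
  have memJ : ∀ a : R, a ∈ J ↔ a ∈ Jcar := fun a =>
    TwoSidedIdeal.mem_mk' _ _ _ _ _ _ a
  -- coefficients of elements of I are in J
  have hcoeffJ : ∀ f ∈ I, ∀ i, f.coeff i ∈ J := by
    intro f hf i
    rw [memJ]
    intro q hq r j
    have h1 : (f * C r) * C (q.coeff j) = 0 :=
      key hR I q.natDegree q le_rfl hq _ (I.mul_mem_right _ _ hf) j
    have h2 : ((f * C r) * C (q.coeff j)).coeff i = 0 := by rw [h1, coeff_zero]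
    rwa [coeff_mul_C, coeff_mul_C] at h2
  obtain ⟨e, hee, hset⟩ := hR J
  refine ⟨C e, by rw [← C_mul, hee], ?_⟩
  ext q
  simp only [Set.mem_setOf_eq]
  constructor
  · intro hq
    -- every coefficient of q is fixed by e
    have hcoeff : ∀ j, e * q.coeff j = q.coeff j := by
      intro j
      have hmem : q.coeff j ∈ {x : R | ∀ a ∈ J, a * x = 0} := by
        intro a ha
        have := (memJ a).mp ha q hq 1 j
        rwa [mul_one] at this
      rw [hset] at hmem
      exact hmem
    ext j
    rw [coeff_C_mul, hcoeff j]
  · intro hq f hf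
    have her : ∀ a ∈ J, a * e = 0 := by
      have : e ∈ {x : R | e * x = x} := hee
      rw [← hset] at this
      exact this
    have hfe : f * C e = 0 := by
      ext i
      rw [coeff_mul_C, coeff_zero]
      exact her _ (hcoeffJ f hf i)
    calc f * q = f * (C e * q) := by rw [hq]
    _ = (f * C e) * q := by rw [mul_assoc]
    _ = 0 := by rw [hfe, zero_mul]
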